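/- Suppose N_T = N_S = N_R = m (square case). Then for every unitary matrix Θ ∈ ℂ^{m×m} and every k with 1 ≤ k ≤ m, the product of the k smallest singular values of H_B·Θ·H_F is bounded below by the corresponding product for the factors: ∏_{n=m−k+1}^{m} σ_n(H_B·Θ·H_F) ≥ ∏_{n=m−k+1}^{m} σ_n(H_B)·σ_n(H_F). -/

import Mathlib

open Matrix

noncomputable def nthLargest {m : ℕ} (f : Fin m → ℝ) (n : ℕ) : ℝ :=
  if h : 1 ≤ n ∧ n ≤ m then (f ∘ Tuple.sort f) ⟨m - n, by omega⟩ else 0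

noncomputable def nthEig {m : ℕ} (Y : Matrix (Fin m) (Fin m) ℂ) (hY : Y.IsHermitian) (n : ℕ) : ℝ :=
  nthLargest hY.eigenvalues n

/-- The `n`-th largest singular value (1-based) of a complex matrix, equal to the square root
of the `n`-th largest eigenvalue of `A * Aᴴ`, with the convention that it is `0` whenever
`n` exceeds the matrix dimensions. -/
noncomputable def singVal {r c : ℕ} (A : Matrix (Fin r) (Fin c) ℂ) (n : ℕ) : ℝ :=
  Real.sqrt (nthLargest (Matrix.isHermitian_mul_conjTranspose_self A).eigenvalues n)

section Aux

open Finset Equiv.Perm Equiv Function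

variable {k m : ℕ}

abbrev KSub (m k : ℕ) := {s : Finset (Fin m) // s.card = k}

lemma orderEmbOfFin_congr {s t : Finset (Fin m)} (h : s = t) (hs : s.card = k) (ht : t.card = k)
    (x : Fin k) : s.orderEmbOfFin hs x = t.orderEmbOfFin ht x := by subst h; rfl

theorem cauchy_binet (A : Matrix (Fin k) (Fin m) ℂ) (B : Matrix (Fin m) (Fin k) ℂ) :
    det (A * B) = ∑ S : KSub m k,
      det (A.submatrix id (S.1.orderEmbOfFin S.2)) * det (B.submatrix (S.1.orderEmbOfFin S.2) id) := by
  have step1 : det (A * B) = ∑ p : Fin k → Fin m,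
      det (A.submatrix id p) * ∏ i, B (p i) i := by
    calc det (A * B) = ∑ σ : Equiv.Perm (Fin k), Equiv.Perm.sign σ • ∏ i, ∑ j, A (σ i) j * B j i := by
          rw [det_apply]
          rfl
      _ = ∑ σ : Equiv.Perm (Fin k), ∑ p : Fin k → Fin m,
            Equiv.Perm.sign σ • ∏ i, (A (σ i) (p i) * B (p i) i) := by
          simp only [prod_univ_sum, smul_sum, Fintype.piFinset_univ]
      _ = ∑ p : Fin k → Fin m, ∑ σ : Equiv.Perm (Fin k),
            Equiv.Perm.sign σ • ∏ i, (A (σ i) (p i) * B (p i) i) := Finset.sum_comm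
      _ = _ := by
          refine Finset.sum_congr rfl fun p _ => ?_
          rw [det_apply, Finset.sum_mul]
          refine Finset.sum_congr rfl fun σ _ => ?_
          rw [Finset.prod_mul_distrib, smul_mul_assoc]
          rfl
  have step2 : ∑ p : Fin k → Fin m, det (A.submatrix id p) * ∏ i, B (p i) i
      = ∑ p ∈ Finset.univ.filter (fun p : Fin k → Fin m => Function.Injective p),
          det (A.submatrix id p) * ∏ i, B (p i) i := by
    refine (Finset.sum_subset (Finset.filter_subset _ _) fun p _ hp => ?_).symm
    simp only [Finset.mem_filter, Finset.mem_univ, true_and] at hp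
    rw [Function.Injective] at hp; push_neg at hp
    obtain ⟨i, j, hpij, hij⟩ := hp
    rw [Matrix.det_zero_of_column_eq hij (fun l => by simp [hpij]), zero_mul]
  have card_im : ∀ p : Fin k → Fin m, Function.Injective p →
      (Finset.univ.image p).card = k := fun p hp => by
    rw [Finset.card_image_of_injective _ hp, Finset.card_univ, Fintype.card_fin]
  have step3 : ∑ p ∈ Finset.univ.filter (fun p : Fin k → Fin m => Function.Injective p),
          det (A.submatrix id p) * ∏ i, B (p i) i
      = ∑ x : KSub m k × Equiv.Perm (Fin k),
          det (A.submatrix id (x.1.1.orderEmbOfFin x.1.2 ∘ x.2))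
            * ∏ i, B (x.1.1.orderEmbOfFin x.1.2 (x.2 i)) i := by
    refine (Finset.sum_bij' (i := fun (x : KSub m k × Equiv.Perm (Fin k)) _ =>
        (x.1.1.orderEmbOfFin x.1.2 ∘ x.2 : Fin k → Fin m))
      (j := fun p hp =>
        (⟨⟨Finset.univ.image p, card_im p (by simpa using hp)⟩,
        Equiv.ofBijective (fun i => ((Finset.univ.image p).orderIsoOfFin
            (card_im p (by simpa using hp))).symm ⟨p i, by simp⟩)
          ((Finite.injective_iff_bijective).mp (fun a b hab => (by simpa using hp : Function.Injective p) (by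
            have := congrArg (fun z => ((((Finset.univ.image p).orderIsoOfFin
              (card_im p (by simpa using hp)))) z).1) hab
            simpa using this)))⟩ : KSub m k × Equiv.Perm (Fin k)))
      ?_ ?_ ?_ ?_ ?_).symm
    · intro x _
      simp only [Finset.mem_filter, Finset.mem_univ, true_and]
      exact (x.1.1.orderEmbOfFin x.1.2).injective.comp x.2.injective
    · intro p hp; exact Finset.mem_univ _
    · -- left inverse : j (i x) = x
      rintro ⟨⟨S, hS⟩, σ⟩ _
      have hp : Function.Injective (S.orderEmbOfFin hS ∘ σ) :=
        (S.orderEmbOfFin hS).injective.comp σ.injective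
      have him : Finset.univ.image (S.orderEmbOfFin hS ∘ σ) = S := by
        ext a
        simp only [Finset.mem_image, Finset.mem_univ, true_and, Function.comp_apply]
        constructor
        · rintro ⟨i, rfl⟩; exact Finset.orderEmbOfFin_mem _ _ _
        · intro ha
          refine ⟨σ.symm ((S.orderIsoOfFin hS).symm ⟨a, ha⟩), ?_⟩
          rw [Equiv.apply_symm_apply, ← Finset.coe_orderIsoOfFin_apply,
            OrderIso.apply_symm_apply]
      refine Prod.ext (Subtype.ext him) (Equiv.ext fun i => ?_)
      simp only [Equiv.ofBijective_apply]
      rw [OrderIso.symm_apply_eq]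
      refine Subtype.ext ?_
      rw [Finset.coe_orderIsoOfFin_apply]
      exact (orderEmbOfFin_congr him _ hS (σ i)).symm
    · -- right inverse : i (j p) = p
      intro p hp
      funext i
      show (Finset.univ.image p).orderEmbOfFin _ _ = p i
      rw [← Finset.coe_orderIsoOfFin_apply]
      simp
    · intro x _; rfl
  rw [step1, step2, step3, Fintype.sum_prod_type]
  refine Finset.sum_congr rfl fun S _ => ?_
  calc ∑ σ : Equiv.Perm (Fin k), det (A.submatrix id (S.1.orderEmbOfFin S.2 ∘ σ))
          * ∏ i, B (S.1.orderEmbOfFin S.2 (σ i)) i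
      = ∑ σ : Equiv.Perm (Fin k), det (A.submatrix id (S.1.orderEmbOfFin S.2))
          * (Equiv.Perm.sign σ • ∏ i, B (S.1.orderEmbOfFin S.2 (σ i)) i) := by
        refine Finset.sum_congr rfl fun σ _ => ?_
        have h1 : (A.submatrix id (S.1.orderEmbOfFin S.2 ∘ σ))
            = (A.submatrix id (S.1.orderEmbOfFin S.2)).submatrix id σ := rfl
        rw [h1, Matrix.det_permute']
        simp only [Units.smul_def, zsmul_eq_mul]
        push_cast
        ring
      _ = det (A.submatrix id (S.1.orderEmbOfFin S.2)) * det (B.submatrix (S.1.orderEmbOfFin S.2) id) := by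
        rw [← Finset.mul_sum]
        congr 1
        rw [det_apply]
        rfl


lemma prod_orderEmbOfFin' (S : Finset (Fin m)) (hS : S.card = k) (f : Fin m → ℝ) :
    ∏ j : Fin k, f (S.orderEmbOfFin hS j) = ∏ i ∈ S, f i := by
  have him : S = Finset.univ.image (S.orderEmbOfFin hS) := by
    ext a
    simp only [Finset.mem_image, Finset.mem_univ, true_and]
    rw [← Finset.mem_coe, ← Finset.range_orderEmbOfFin S hS]
    exact Set.mem_range
  conv_rhs => rw [him]
  rw [Finset.prod_image (fun a _ b _ h => (S.orderEmbOfFin hS).injective h)]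

/-- Gram-type expansion of `det (Nᴴ D N)` via Cauchy–Binet. -/
lemma gram_expand (N : Matrix (Fin m) (Fin k) ℂ) (d : Fin m → ℝ) :
    det (Nᴴ * Matrix.diagonal (fun i => (d i : ℂ)) * N) =
      ((∑ S : KSub m k, (∏ i ∈ S.1, d i) *
        Complex.normSq (det (N.submatrix (S.1.orderEmbOfFin S.2) id)) : ℝ) : ℂ) := by
  rw [cauchy_binet]
  push_cast
  refine Finset.sum_congr rfl fun S _ => ?_
  have h1 : (Nᴴ * Matrix.diagonal (fun i => (d i : ℂ))).submatrix id (S.1.orderEmbOfFin S.2)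
      = (Nᴴ.submatrix id (S.1.orderEmbOfFin S.2)) *
          Matrix.diagonal (fun j => (d (S.1.orderEmbOfFin S.2 j) : ℂ)) := by
    ext i j
    simp [Matrix.mul_diagonal]
  rw [h1, det_mul, det_diagonal]
  have h2 : Nᴴ.submatrix id (S.1.orderEmbOfFin S.2) = (N.submatrix (S.1.orderEmbOfFin S.2) id)ᴴ := by
    rw [← Matrix.conjTranspose_submatrix]
  rw [h2, Matrix.det_conjTranspose]
  set z := det (N.submatrix (S.1.orderEmbOfFin S.2) id)
  have h3 : ∏ j : Fin k, (d (S.1.orderEmbOfFin S.2 j) : ℂ) = ((∏ i ∈ S.1, d i : ℝ) : ℂ) := by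
    rw [← prod_orderEmbOfFin' S.1 S.2 d]; push_cast; rfl
  rw [h3]
  have h4 : (star z) * z = (Complex.normSq z : ℂ) := by
    rw [mul_comm]; exact Complex.mul_conj z
  have h5 : ∏ i ∈ S.1, ((d i : ℂ)) = ((∏ i ∈ S.1, d i : ℝ) : ℂ) := by push_cast; rfl
  rw [h5, ← h4]; ring

lemma prod_le_prod_of_all_le {A B : Finset (Fin m)} (d : Fin m → ℝ) (hd : ∀ i, 0 ≤ d i)
    (hcard : B.card = A.card) (hle : ∀ y ∈ B, ∀ x ∈ A, d y ≤ d x) :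
    ∏ y ∈ B, d y ≤ ∏ x ∈ A, d x := by
  rcases B.eq_empty_or_nonempty with rfl | hB
  · have : A = ∅ := by
      rw [← Finset.card_eq_zero]; simpa using hcard.symm
    simp [this]
  · obtain ⟨y₀, hy₀, hymax⟩ := B.exists_max_image d hB
    set c := d y₀ with hc
    have h1 : ∏ y ∈ B, d y ≤ c ^ B.card := by
      rw [← Finset.prod_const]
      exact Finset.prod_le_prod (fun i _ => hd i) (fun i hi => hymax i hi)
    have h2 : c ^ A.card ≤ ∏ x ∈ A, d x := by
      rw [← Finset.prod_const]
      exact Finset.prod_le_prod (fun _ _ => hd y₀) (fun x hx => hle y₀ hy₀ x hx)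
    calc ∏ y ∈ B, d y ≤ c ^ B.card := h1
      _ = c ^ A.card := by rw [hcard]
      _ ≤ ∏ x ∈ A, d x := h2

lemma prod_min_subset {S T : Finset (Fin m)} (d : Fin m → ℝ) (hd : ∀ i, 0 ≤ d i)
    (hcard : S.card = T.card) (hmin : ∀ j ∈ T, ∀ i, i ∉ T → d j ≤ d i) :
    ∏ j ∈ T, d j ≤ ∏ i ∈ S, d i := by
  rw [← Finset.prod_inter_mul_prod_diff T S d, ← Finset.prod_inter_mul_prod_diff S T d]
  have hC : T ∩ S = S ∩ T := Finset.inter_comm T S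
  rw [hC]
  refine mul_le_mul_of_nonneg_left ?_ (Finset.prod_nonneg fun i _ => hd i)
  refine prod_le_prod_of_all_le d hd ?_ ?_
  · rw [Finset.card_sdiff_comm hcard.symm]
  · intro y hy x hx
    exact hmin y (Finset.mem_sdiff.mp hy).1 x (Finset.mem_sdiff.mp hx).2

lemma nthLargest_prod_eq (d : Fin m → ℝ) (hk1 : 1 ≤ k) (hk2 : k ≤ m) :
    ∏ n ∈ Finset.Icc (m - k + 1) m, nthLargest d n
      = ∏ i ∈ Finset.univ.filter (fun i : Fin m => i.val < k), d (Tuple.sort d i) := by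
  refine Finset.prod_bij' (i := fun n hn => (⟨m - n, ?_⟩ : Fin m))
    (j := fun (i : Fin m) _ => m - i.val) ?_ ?_ ?_ ?_ ?_
  · have := Finset.mem_Icc.mp hn; omega
  · intro n hn
    have := Finset.mem_Icc.mp hn
    simp only [Finset.mem_filter, Finset.mem_univ, true_and]
    omega
  · intro i hi
    simp only [Finset.mem_filter, Finset.mem_univ, true_and] at hi
    rw [Finset.mem_Icc]
    have := i.2
    show m - k + 1 ≤ m - i.val ∧ m - i.val ≤ m
    omega
  · intro n hn
    have := Finset.mem_Icc.mp hn
    show m - (m - n) = n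
    omega
  · intro i hi
    simp only [Finset.mem_filter, Finset.mem_univ, true_and] at hi
    have h2 := i.2
    apply Fin.ext
    show m - (m - i.val) = i.val
    omega
  · intro n hn
    have h := Finset.mem_Icc.mp hn
    rw [nthLargest, dif_pos ⟨by omega, h.2⟩]
    rfl

lemma card_filter_lt_k (hk2 : k ≤ m) :
    (Finset.univ.filter (fun i : Fin m => i.val < k)).card = k := by
  have : (Finset.univ.filter (fun i : Fin m => i.val < k))
      = (Finset.univ : Finset (Fin k)).image (Fin.castLE hk2) := by
    ext i
    simp only [Finset.mem_filter, Finset.mem_univ, true_and, Finset.mem_image]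
    constructor
    · intro h; exact ⟨⟨i.val, h⟩, rfl⟩
    · rintro ⟨j, rfl⟩; exact j.2
  rw [this, Finset.card_image_of_injective _ (Fin.castLE_injective hk2)]
  simp

lemma prod_nthLargest_le (d : Fin m → ℝ) (hd : ∀ i, 0 ≤ d i) (hk1 : 1 ≤ k) (hk2 : k ≤ m)
    (S : Finset (Fin m)) (hS : S.card = k) :
    ∏ n ∈ Finset.Icc (m - k + 1) m, nthLargest d n ≤ ∏ i ∈ S, d i := by
  rw [nthLargest_prod_eq d hk1 hk2]
  set σ := Tuple.sort d with hσ
  have him : ∏ i ∈ Finset.univ.filter (fun i : Fin m => i.val < k), d (σ i)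
      = ∏ j ∈ (Finset.univ.filter (fun i : Fin m => i.val < k)).image σ, d j :=
    (Finset.prod_image (fun a _ b _ h => σ.injective h)).symm
  rw [him]
  refine prod_min_subset d hd ?_ ?_
  · rw [Finset.card_image_of_injective _ σ.injective, card_filter_lt_k hk2, hS]
  · intro j hj i hi
    simp only [Finset.mem_image, Finset.mem_filter, Finset.mem_univ, true_and] at hj hi
    obtain ⟨a, ha, rfl⟩ := hj
    have hb : ¬ ((σ.symm i).val < k) := fun h => hi ⟨σ.symm i, h, σ.apply_symm_apply i⟩
    have : d (σ a) ≤ d (σ (σ.symm i)) := Tuple.monotone_sort d (by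
      show a ≤ σ.symm i
      exact Fin.le_def.mpr (by omega))
    simpa using this

lemma nthLargest_nonneg {f : Fin m → ℝ} (hf : ∀ i, 0 ≤ f i) (n : ℕ) : 0 ≤ nthLargest f n := by
  unfold nthLargest
  split
  · exact hf _
  · exact le_refl 0

lemma core (N : Matrix (Fin m) (Fin k) ℂ) (d : Fin m → ℝ) (hd : ∀ i, 0 ≤ d i)
    (hk1 : 1 ≤ k) (hk2 : k ≤ m) :
    (∏ n ∈ Finset.Icc (m - k + 1) m, nthLargest d n) * (det (Nᴴ * N)).re
      ≤ (det (Nᴴ * Matrix.diagonal (fun i => (d i : ℂ)) * N)).re := by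
  have h1 := gram_expand N d
  have h0 := gram_expand N (fun _ => (1 : ℝ))
  have e1 : Nᴴ * Matrix.diagonal (fun _ : Fin m => ((1:ℝ) : ℂ)) * N = Nᴴ * N := by
    have : Matrix.diagonal (fun _ : Fin m => ((1:ℝ) : ℂ)) = 1 := by
      simp [Matrix.diagonal_one]
    rw [this, Matrix.mul_one]
  rw [e1] at h0
  rw [h1, h0]
  simp only [Complex.ofReal_re]
  rw [Finset.mul_sum]
  refine Finset.sum_le_sum fun S _ => ?_
  simp only [Finset.prod_const_one, one_mul]
  exact mul_le_mul_of_nonneg_right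
    (prod_nthLargest_le d hd hk1 hk2 S.1 S.2) (Complex.normSq_nonneg _)

lemma compress (M : Matrix (Fin m) (Fin k) ℂ) (V : Matrix (Fin m) (Fin m) ℂ) (hV : Vᴴ * V = 1)
    (d : Fin m → ℝ) (hd : ∀ i, 0 ≤ d i) (hk1 : 1 ≤ k) (hk2 : k ≤ m) :
    (∏ n ∈ Finset.Icc (m - k + 1) m, nthLargest d n) * (det (Mᴴ * M)).re
      ≤ (det (Mᴴ * (V * Matrix.diagonal (fun i => (d i : ℂ)) * Vᴴ) * M)).re := by
  have hV' : V * Vᴴ = 1 := mul_eq_one_comm.mp hV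
  have h := core (Vᴴ * M) d hd hk1 hk2
  have e1 : (Vᴴ * M)ᴴ * (Vᴴ * M) = Mᴴ * M := by
    rw [Matrix.conjTranspose_mul, Matrix.conjTranspose_conjTranspose,
      Matrix.mul_assoc, ← Matrix.mul_assoc V, hV', Matrix.one_mul]
  have e2 : (Vᴴ * M)ᴴ * Matrix.diagonal (fun i => (d i : ℂ)) * (Vᴴ * M)
      = Mᴴ * (V * Matrix.diagonal (fun i => (d i : ℂ)) * Vᴴ) * M := by
    rw [Matrix.conjTranspose_mul, Matrix.conjTranspose_conjTranspose]
    simp only [Matrix.mul_assoc]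
  rw [e1, e2] at h
  exact h

lemma filter_lt_eq_image (hk2 : k ≤ m) :
    (Finset.univ.filter (fun i : Fin m => i.val < k))
      = (Finset.univ : Finset (Fin k)).image (Fin.castLE hk2) := by
  ext i
  simp only [Finset.mem_filter, Finset.mem_univ, true_and, Finset.mem_image]
  constructor
  · intro h; exact ⟨⟨i.val, h⟩, rfl⟩
  · rintro ⟨j, rfl⟩; exact j.2

lemma eigen_select {W : Matrix (Fin m) (Fin m) ℂ} (hW : W.IsHermitian)
    (hk1 : 1 ≤ k) (hk2 : k ≤ m) :
    ∃ Q : Matrix (Fin m) (Fin k) ℂ, Qᴴ * Q = 1 ∧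
      det (Qᴴ * W * Q)
        = ((∏ n ∈ Finset.Icc (m - k + 1) m, nthLargest hW.eigenvalues n : ℝ) : ℂ) := by
  set σ := Tuple.sort hW.eigenvalues with hσdef
  set e : Fin k → Fin m := fun j => σ (Fin.castLE hk2 j) with hedef
  have he : Function.Injective e := fun a b hab => by
    have := σ.injective hab
    exact Fin.castLE_injective hk2 this
  set U : Matrix (Fin m) (Fin m) ℂ := (hW.eigenvectorUnitary : Matrix (Fin m) (Fin m) ℂ) with hU
  have hU1 : Uᴴ * U = 1 := Unitary.star_mul_self_of_mem hW.eigenvectorUnitary.2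
  have hU2 : U * Uᴴ = 1 := mul_eq_one_comm.mp hU1
  refine ⟨U.submatrix id e, ?_, ?_⟩
  · rw [Matrix.conjTranspose_submatrix,
      ← Matrix.submatrix_mul Uᴴ U e id e Function.bijective_id, hU1,
      Matrix.submatrix_one e he]
  · have hdiag : Uᴴ * W * U = Matrix.diagonal (RCLike.ofReal ∘ hW.eigenvalues) := by
      conv_lhs => rw [hW.spectral_theorem, Unitary.conjStarAlgAut_apply]
      change Uᴴ * (U * _ * Uᴴ) * U = _
      simp only [← Matrix.mul_assoc]
      rw [hU1, Matrix.one_mul, Matrix.mul_assoc, hU1, Matrix.mul_one]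
    have haux : Uᴴ.submatrix e id * W = (Uᴴ * W).submatrix e id := by
      ext i j
      simp [Matrix.mul_apply]
    have hQWQ : (U.submatrix id e)ᴴ * W * (U.submatrix id e)
        = Matrix.diagonal ((RCLike.ofReal (K := ℂ)) ∘ hW.eigenvalues ∘ e) := by
      rw [Matrix.conjTranspose_submatrix, haux,
        ← Matrix.submatrix_mul (Uᴴ * W) U e id e Function.bijective_id,
        hdiag, Matrix.submatrix_diagonal _ e he]
      rfl
    rw [hQWQ, Matrix.det_diagonal]
    have hc : ∏ j : Fin k, ((hW.eigenvalues (e j) : ℂ))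
        = ((∏ j : Fin k, hW.eigenvalues (e j) : ℝ) : ℂ) := by push_cast; rfl
    rw [show (∏ i : Fin k, ((RCLike.ofReal (K := ℂ)) ∘ hW.eigenvalues ∘ e) i)
      = ∏ j : Fin k, ((hW.eigenvalues (e j) : ℂ)) from rfl, hc]
    congr 1
    rw [nthLargest_prod_eq hW.eigenvalues hk1 hk2, filter_lt_eq_image hk2,
      Finset.prod_image (fun a _ b _ h => Fin.castLE_injective hk2 h)]

lemma prod_sqrt {α : Type*} (s : Finset α) (g : α → ℝ) (hg : ∀ n ∈ s, 0 ≤ g n) :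
    ∏ n ∈ s, Real.sqrt (g n) = Real.sqrt (∏ n ∈ s, g n) := by
  induction s using Finset.cons_induction with
  | empty => simp
  | cons a s ha ih =>
    rw [Finset.prod_cons, Finset.prod_cons, ih (fun n hn => hg n (Finset.mem_cons_of_mem hn)),
      Real.sqrt_mul (hg a (Finset.mem_cons_self a s))]

theorem stmt8 {m : ℕ}
    (H_B : Matrix (Fin m) (Fin m) ℂ) (H_F : Matrix (Fin m) (Fin m) ℂ)
    (Θ : Matrix (Fin m) (Fin m) ℂ) (hΘ : Θᴴ * Θ = 1)
    (k : ℕ) (hk1 : 1 ≤ k) (hk2 : k ≤ m) :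
    ∏ n ∈ Finset.Icc (m - k + 1) m, singVal H_B n * singVal H_F n ≤
      ∏ n ∈ Finset.Icc (m - k + 1) m, singVal (H_B * Θ * H_F) n := by
  set A := H_B * Θ * H_F with hAdef
  have hWA := Matrix.isHermitian_mul_conjTranspose_self A
  have hWF := Matrix.isHermitian_mul_conjTranspose_self H_F
  have hWB := Matrix.isHermitian_mul_conjTranspose_self H_B
  set lA := hWA.eigenvalues with hlA
  set lF := hWF.eigenvalues with hlF
  set lB := hWB.eigenvalues with hlB
  have hlA0 : ∀ i, 0 ≤ lA i := Matrix.eigenvalues_self_mul_conjTranspose_nonneg A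
  have hlF0 : ∀ i, 0 ≤ lF i := Matrix.eigenvalues_self_mul_conjTranspose_nonneg H_F
  have hlB0 : ∀ i, 0 ≤ lB i := Matrix.eigenvalues_self_mul_conjTranspose_nonneg H_B
  set PA := ∏ n ∈ Finset.Icc (m - k + 1) m, nthLargest lA n with hPA
  set PF := ∏ n ∈ Finset.Icc (m - k + 1) m, nthLargest lF n with hPF
  set PB := ∏ n ∈ Finset.Icc (m - k + 1) m, nthLargest lB n with hPB
  have hPF0 : 0 ≤ PF := Finset.prod_nonneg fun n _ => nthLargest_nonneg hlF0 n
  have hPB0 : 0 ≤ PB := Finset.prod_nonneg fun n _ => nthLargest_nonneg hlB0 n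
  -- the selected eigenvector block for A * Aᴴ
  obtain ⟨Q, hQ, hdet⟩ := eigen_select hWA hk1 hk2
  -- spectral decompositions
  set UF : Matrix (Fin m) (Fin m) ℂ := (hWF.eigenvectorUnitary : Matrix (Fin m) (Fin m) ℂ)
    with hUFdef
  have hUF1 : UFᴴ * UF = 1 := Unitary.star_mul_self_of_mem hWF.eigenvectorUnitary.2
  have hsF : H_F * H_Fᴴ = UF * Matrix.diagonal (fun i => (lF i : ℂ)) * UFᴴ := by
    conv_lhs => rw [hWF.spectral_theorem]
    rfl
  set UB : Matrix (Fin m) (Fin m) ℂ := (hWB.eigenvectorUnitary : Matrix (Fin m) (Fin m) ℂ)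
    with hUBdef
  have hUB1 : UBᴴ * UB = 1 := Unitary.star_mul_self_of_mem hWB.eigenvectorUnitary.2
  have hsB : H_B * H_Bᴴ = UB * Matrix.diagonal (fun i => (lB i : ℂ)) * UBᴴ := by
    conv_lhs => rw [hWB.spectral_theorem]
    rfl
  set V : Matrix (Fin m) (Fin m) ℂ := Θ * UF with hVdef
  have hV : Vᴴ * V = 1 := by
    rw [hVdef, Matrix.conjTranspose_mul, Matrix.mul_assoc, ← Matrix.mul_assoc Θᴴ, hΘ,
      Matrix.one_mul, hUF1]
  set M : Matrix (Fin m) (Fin k) ℂ := H_Bᴴ * Q with hMdef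
  have e3 : Qᴴ * (A * Aᴴ) * Q
      = Mᴴ * (V * Matrix.diagonal (fun i => (lF i : ℂ)) * Vᴴ) * M := by
    have h1 : A * Aᴴ = H_B * (Θ * ((H_F * H_Fᴴ) * (Θᴴ * H_Bᴴ))) := by
      rw [hAdef]
      simp only [Matrix.conjTranspose_mul, Matrix.mul_assoc]
    rw [h1, hsF]
    simp only [hMdef, hVdef, Matrix.conjTranspose_mul, Matrix.conjTranspose_conjTranspose,
      Matrix.mul_assoc]
  have step1 := compress M V hV lF hlF0 hk1 hk2
  have hPAeq : (det (Mᴴ * (V * Matrix.diagonal (fun i => (lF i : ℂ)) * Vᴴ) * M)).re = PA := by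
    rw [← e3, hdet, Complex.ofReal_re]
  have e4 : Mᴴ * M = Qᴴ * (UB * Matrix.diagonal (fun i => (lB i : ℂ)) * UBᴴ) * Q := by
    rw [← hsB]
    simp only [hMdef, Matrix.conjTranspose_mul, Matrix.conjTranspose_conjTranspose,
      Matrix.mul_assoc]
  have step2 := compress Q UB hUB1 lB hlB0 hk1 hk2
  rw [hQ] at step2
  have hdet1 : (det (1 : Matrix (Fin k) (Fin k) ℂ)).re = 1 := by simp
  rw [hdet1, mul_one] at step2
  rw [← e4] at step2
  -- key inequality
  have key : PB * PF ≤ PA := by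
    calc PB * PF = PF * PB := mul_comm _ _
      _ ≤ PF * (det (Mᴴ * M)).re := mul_le_mul_of_nonneg_left step2 hPF0
      _ ≤ PA := by rw [← hPAeq]; exact step1
  -- rewrite both sides as square roots
  have hR : ∏ n ∈ Finset.Icc (m - k + 1) m, singVal A n = Real.sqrt PA := by
    rw [hPA, ← prod_sqrt _ _ (fun n _ => nthLargest_nonneg hlA0 n)]
    rfl
  have hL : ∏ n ∈ Finset.Icc (m - k + 1) m, singVal H_B n * singVal H_F n
      = Real.sqrt (PB * PF) := by
    have h1 : ∀ n ∈ Finset.Icc (m - k + 1) m, singVal H_B n * singVal H_F n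
        = Real.sqrt (nthLargest lB n * nthLargest lF n) := by
      intro n _
      rw [Real.sqrt_mul (nthLargest_nonneg hlB0 n)]
      rfl
    rw [Finset.prod_congr rfl h1,
      prod_sqrt _ _ (fun n _ => mul_nonneg (nthLargest_nonneg hlB0 n) (nthLargest_nonneg hlF0 n)),
      Finset.prod_mul_distrib]
  rw [hL, hR]
  exact Real.sqrt_le_sqrt key

end Aux
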